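/- If y and z are independent and conditionally independent given x, then the mutual information I(x; y, z) equals I(x; y) + I(x; z). -/
import Mathlib


theorem stmt_0 {α β γ : Type*} [Fintype α] [Fintype β] [Fintype γ]
    (p : α → β → γ → ℝ)
    (hnn : ∀ x y z, 0 ≤ p x y z)
    (hsum : ∑ x, ∑ y, ∑ z, p x y z = 1)
    (px : α → ℝ) (py : β → ℝ) (pz : γ → ℝ)
    (pxy : α → β → ℝ) (pxz : α → γ → ℝ) (pyz : β → γ → ℝ)
    (hpx : ∀ x, px x = ∑ y, ∑ z, p x y z)
    (hpy : ∀ y, py y = ∑ x, ∑ z, p x y z)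
    (hpz : ∀ z, pz z = ∑ x, ∑ y, p x y z)
    (hpxy : ∀ x y, pxy x y = ∑ z, p x y z)
    (hpxz : ∀ x z, pxz x z = ∑ y, p x y z)
    (hpyz : ∀ y z, pyz y z = ∑ x, p x y z)
    (hindep : ∀ y z, pyz y z = py y * pz z)
    (hcond : ∀ x y z, 0 < px x → p x y z * px x = pxy x y * pxz x z) :
    ∑ x, ∑ y, ∑ z, p x y z * Real.log (p x y z / (px x * pyz y z))
      = (∑ x, ∑ y, pxy x y * Real.log (pxy x y / (px x * py y)))
        + ∑ x, ∑ z, pxz x z * Real.log (pxz x z / (px x * pz z)) := by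
  have key : ∀ x y z, p x y z * Real.log (p x y z / (px x * pyz y z))
      = p x y z * Real.log (pxy x y / (px x * py y))
        + p x y z * Real.log (pxz x z / (px x * pz z)) := by
    intro x y z
    by_cases hp : p x y z = 0
    · simp [hp]
    have hp' : 0 < p x y z := lt_of_le_of_ne (hnn x y z) (Ne.symm hp)
    have hle1 : p x y z ≤ ∑ z', p x y z' :=
      Finset.single_le_sum (fun i _ => hnn x y i) (Finset.mem_univ z)
    have hpxyp : 0 < pxy x y := by rw [hpxy]; linarith
    have hpxzp : 0 < pxz x z := by
      rw [hpxz]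
      have := Finset.single_le_sum (fun i _ => hnn x i z) (Finset.mem_univ y)
      linarith
    have hpxp : 0 < px x := by
      rw [hpx]
      have : ∑ z', p x y z' ≤ ∑ y', ∑ z', p x y' z' :=
        Finset.single_le_sum (fun i _ => Finset.sum_nonneg fun j _ => hnn x i j)
          (Finset.mem_univ y)
      linarith
    have hpyp : 0 < py y := by
      rw [hpy]
      have h1 : p x y z ≤ ∑ z', p x y z' :=
        Finset.single_le_sum (fun i _ => hnn x y i) (Finset.mem_univ z)
      have h2 : ∑ z', p x y z' ≤ ∑ x', ∑ z', p x' y z' :=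
        Finset.single_le_sum (fun i _ => Finset.sum_nonneg fun j _ => hnn i y j)
          (Finset.mem_univ x)
      linarith
    have hpzp : 0 < pz z := by
      rw [hpz]
      have h1 : p x y z ≤ ∑ y', p x y' z :=
        Finset.single_le_sum (fun i _ => hnn x i z) (Finset.mem_univ y)
      have h2 : ∑ y', p x y' z ≤ ∑ x', ∑ y', p x' y' z :=
        Finset.single_le_sum (fun i _ => Finset.sum_nonneg fun j _ => hnn i j z)
          (Finset.mem_univ x)
      linarith
    have hmul := hcond x y z hpxp
    have hlog : Real.log (p x y z) + Real.log (px x)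
        = Real.log (pxy x y) + Real.log (pxz x z) := by
      rw [← Real.log_mul hp'.ne' hpxp.ne', ← Real.log_mul hpxyp.ne' hpxzp.ne', hmul]
    have hL : Real.log (p x y z / (px x * pyz y z))
        = Real.log (pxy x y / (px x * py y)) + Real.log (pxz x z / (px x * pz z)) := by
      rw [hindep y z,
        Real.log_div hp'.ne' (by positivity),
        Real.log_div hpxyp.ne' (by positivity),
        Real.log_div hpxzp.ne' (by positivity),
        Real.log_mul hpxp.ne' (by positivity),
        Real.log_mul hpxp.ne' hpyp.ne',
        Real.log_mul hpxp.ne' hpzp.ne',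
        Real.log_mul hpyp.ne' hpzp.ne']
      linarith
    rw [hL, mul_add]
  simp only [key, Finset.sum_add_distrib]
  congr 1
  · apply Finset.sum_congr rfl; intro x _
    apply Finset.sum_congr rfl; intro y _
    rw [← Finset.sum_mul, ← hpxy]
  · apply Finset.sum_congr rfl; intro x _
    rw [Finset.sum_comm]
    apply Finset.sum_congr rfl; intro z _
    rw [← Finset.sum_mul, ← hpxz]
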